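/- Let n ≥ 1 and k ≥ 0 with k ≠ n, and let ρ be C¹ and 2π-periodic with Fourier coefficients a_j, b_j (with convention a_{−j} = −a_j, b_{−j} = b_j for j > 0). Define 𝓚 = (1/√π)∫ρ' sin kθ cos nθ, 𝓛 = (1/√π)∫ρ cos kθ cos nθ, 𝓜 = (1/√π)∫ρ' cos kθ cos nθ, 𝓝 = (1/√π)∫ρ sin kθ cos nθ, 𝓣 = (1/√π)∫ρ' sin kθ sin nθ, 𝓤 = (1/√π)∫ρ cos kθ sin nθ, 𝓥 = (1/√π)∫ρ' cos kθ sin nθ, 𝓦 = (1/√π)∫ρ sin kθ sin nθ (all integrals over [0,2π]). Then for any real constant β = k−n−1: (𝓚+β𝓛)(−𝓤−𝓜) + (−𝓜+β𝓝)(−𝓦−𝓚) − (𝓣+β𝓤)(−𝓛+𝓥) − (−𝓥+β𝓦)(−𝓝+𝓣) = 0. -/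

import Mathlib

open Real MeasureTheory intervalIntegral

/-- The key identity showing that the second-order perturbation matrix M_n^{(2)} is
symmetric: with β = k−n−1 and the integral constants 𝓚,𝓛,𝓜,𝓝,𝓣,𝓤,𝓥,𝓦,
(𝓚+β𝓛)(−𝓤−𝓜) + (−𝓜+β𝓝)(−𝓦−𝓚) − (𝓣+β𝓤)(−𝓛+𝓥) − (−𝓥+β𝓦)(−𝓝+𝓣) = 0. -/
theorem M2_symmetric_identity (ρ ρ' : ℝ → ℝ) (n k : ℕ) (hn : 1 ≤ n) (hkn : k ≠ n)
    (hd : ∀ θ : ℝ, HasDerivAt ρ (ρ' θ) θ)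
    (hc : Continuous ρ')
    (hper : Function.Periodic ρ (2 * π)) :
    let K := (1 / Real.sqrt π) *
      (∫ θ in (0:ℝ)..(2 * π), ρ' θ * Real.sin (k * θ) * Real.cos (n * θ))
    let L := (1 / Real.sqrt π) *
      (∫ θ in (0:ℝ)..(2 * π), ρ θ * Real.cos (k * θ) * Real.cos (n * θ))
    let M := (1 / Real.sqrt π) *
      (∫ θ in (0:ℝ)..(2 * π), ρ' θ * Real.cos (k * θ) * Real.cos (n * θ))
    let N := (1 / Real.sqrt π) *
      (∫ θ in (0:ℝ)..(2 * π), ρ θ * Real.sin (k * θ) * Real.cos (n * θ))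
    let T := (1 / Real.sqrt π) *
      (∫ θ in (0:ℝ)..(2 * π), ρ' θ * Real.sin (k * θ) * Real.sin (n * θ))
    let U := (1 / Real.sqrt π) *
      (∫ θ in (0:ℝ)..(2 * π), ρ θ * Real.cos (k * θ) * Real.sin (n * θ))
    let V := (1 / Real.sqrt π) *
      (∫ θ in (0:ℝ)..(2 * π), ρ' θ * Real.cos (k * θ) * Real.sin (n * θ))
    let W := (1 / Real.sqrt π) *
      (∫ θ in (0:ℝ)..(2 * π), ρ θ * Real.sin (k * θ) * Real.sin (n * θ))
    let β : ℝ := (k : ℝ) - (n : ℝ) - 1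
    (K + β * L) * (-U - M) + (-M + β * N) * (-W - K)
      - (T + β * U) * (-L + V) - (-V + β * W) * (-N + T) = 0 := by

  intro K L M N T U V W β
  have hρc : Continuous ρ := by
    rw [continuous_iff_continuousAt]; exact fun θ => (hd θ).continuousAt
  have hρper : ρ (2 * π) = ρ 0 := by simpa using hper 0
  have hs : ∀ (c θ : ℝ), HasDerivAt (fun x => Real.sin (c * x)) (c * Real.cos (c * θ)) θ := by
    intro c θ
    simpa [mul_comm, Function.comp_def] using (Real.hasDerivAt_sin (c * θ)).comp θ ((hasDerivAt_id θ).const_mul c)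
  have hco : ∀ (c θ : ℝ), HasDerivAt (fun x => Real.cos (c * x)) (-(c * Real.sin (c * θ))) θ := by
    intro c θ
    simpa [mul_comm, Function.comp_def] using (Real.hasDerivAt_cos (c * θ)).comp θ ((hasDerivAt_id θ).const_mul c)
  have csin : ∀ c : ℝ, Continuous fun θ : ℝ => Real.sin (c * θ) :=
    fun c => Real.continuous_sin.comp (continuous_const.mul continuous_id)
  have ccos : ∀ c : ℝ, Continuous fun θ : ℝ => Real.cos (c * θ) :=
    fun c => Real.continuous_cos.comp (continuous_const.mul continuous_id)
  have hsin0 : ∀ m : ℕ, Real.sin ((m : ℝ) * (2 * π)) = 0 := by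
    intro m
    have h : (m : ℝ) * (2 * π) = ((2 * m : ℕ) : ℝ) * π := by push_cast; ring
    rw [h, Real.sin_nat_mul_pi]
  have hcos1 : ∀ m : ℕ, Real.cos ((m : ℝ) * (2 * π)) = 1 := fun m => Real.cos_nat_mul_two_pi m
  have parts : ∀ g g' : ℝ → ℝ, (∀ θ, HasDerivAt g (g' θ) θ) → Continuous g' →
      ρ (2 * π) * g (2 * π) = ρ 0 * g 0 →
      (∫ θ in (0:ℝ)..(2 * π), ρ' θ * g θ) = -∫ θ in (0:ℝ)..(2 * π), ρ θ * g' θ := by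
    intro g g' hg hgc hb
    have hgcont : Continuous g := by
      rw [continuous_iff_continuousAt]; exact fun θ => (hg θ).continuousAt
    have h1 : IntervalIntegrable (fun θ => ρ' θ * g θ) volume 0 (2 * π) :=
      (hc.mul hgcont).intervalIntegrable _ _
    have h2 : IntervalIntegrable (fun θ => ρ θ * g' θ) volume 0 (2 * π) :=
      (hρc.mul hgc).intervalIntegrable _ _
    have key := intervalIntegral.integral_deriv_mul_eq_sub (a := (0:ℝ)) (b := 2 * π)
      (u := ρ) (v := g) (u' := ρ') (v' := g')
      (fun x _ => hd x) (fun x _ => hg x) (hc.intervalIntegrable _ _) (hgc.intervalIntegrable _ _)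
    rw [intervalIntegral.integral_add h1 h2] at key
    linarith [key, hb]
  have lin2 : ∀ (A B : ℝ → ℝ), Continuous A → Continuous B → ∀ c d : ℝ,
      (∫ θ in (0:ℝ)..(2 * π), (c * A θ + d * B θ)) =
        c * (∫ θ in (0:ℝ)..(2 * π), A θ) + d * ∫ θ in (0:ℝ)..(2 * π), B θ := by
    intro A B hA hB c d
    rw [intervalIntegral.integral_add ((by fun_prop : Continuous fun θ => c * A θ).intervalIntegrable _ _)
      ((by fun_prop : Continuous fun θ => d * B θ).intervalIntegrable _ _),
      intervalIntegral.integral_const_mul, intervalIntegral.integral_const_mul]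
  have hIcc : Continuous fun θ : ℝ => ρ θ * Real.cos ((k:ℝ) * θ) * Real.cos ((n:ℝ) * θ) :=
    (hρc.mul (ccos _)).mul (ccos _)
  have hIsc : Continuous fun θ : ℝ => ρ θ * Real.sin ((k:ℝ) * θ) * Real.cos ((n:ℝ) * θ) :=
    (hρc.mul (csin _)).mul (ccos _)
  have hIcs : Continuous fun θ : ℝ => ρ θ * Real.cos ((k:ℝ) * θ) * Real.sin ((n:ℝ) * θ) :=
    (hρc.mul (ccos _)).mul (csin _)
  have hIss : Continuous fun θ : ℝ => ρ θ * Real.sin ((k:ℝ) * θ) * Real.sin ((n:ℝ) * θ) :=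
    (hρc.mul (csin _)).mul (csin _)
  -- K relation: ∫ ρ' sin k cos n = -k ∫ρ cc + n ∫ρ ss
  have hK : (∫ θ in (0:ℝ)..(2 * π), ρ' θ * Real.sin ((k:ℝ) * θ) * Real.cos ((n:ℝ) * θ)) =
      -(k:ℝ) * (∫ θ in (0:ℝ)..(2 * π), ρ θ * Real.cos ((k:ℝ) * θ) * Real.cos ((n:ℝ) * θ))
      + (n:ℝ) * ∫ θ in (0:ℝ)..(2 * π), ρ θ * Real.sin ((k:ℝ) * θ) * Real.sin ((n:ℝ) * θ) := by
    have hg : ∀ θ : ℝ, HasDerivAt (fun x => Real.sin ((k:ℝ) * x) * Real.cos ((n:ℝ) * x))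
        ((k:ℝ) * Real.cos ((k:ℝ) * θ) * Real.cos ((n:ℝ) * θ)
          + Real.sin ((k:ℝ) * θ) * -((n:ℝ) * Real.sin ((n:ℝ) * θ))) θ :=
      fun θ => (hs (k:ℝ) θ).mul (hco (n:ℝ) θ)
    have hgc : Continuous fun θ : ℝ => (k:ℝ) * Real.cos ((k:ℝ) * θ) * Real.cos ((n:ℝ) * θ)
        + Real.sin ((k:ℝ) * θ) * -((n:ℝ) * Real.sin ((n:ℝ) * θ)) := by fun_prop
    have hb : ρ (2 * π) * (Real.sin ((k:ℝ) * (2 * π)) * Real.cos ((n:ℝ) * (2 * π)))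
        = ρ 0 * (Real.sin ((k:ℝ) * 0) * Real.cos ((n:ℝ) * 0)) := by
      rw [hsin0 k]; simp
    have h := parts _ _ hg hgc hb
    calc (∫ θ in (0:ℝ)..(2 * π), ρ' θ * Real.sin ((k:ℝ) * θ) * Real.cos ((n:ℝ) * θ))
        = ∫ θ in (0:ℝ)..(2 * π), ρ' θ * (Real.sin ((k:ℝ) * θ) * Real.cos ((n:ℝ) * θ)) := by
          simp only [mul_assoc]
      _ = -∫ θ in (0:ℝ)..(2 * π), ρ θ * ((k:ℝ) * Real.cos ((k:ℝ) * θ) * Real.cos ((n:ℝ) * θ)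
            + Real.sin ((k:ℝ) * θ) * -((n:ℝ) * Real.sin ((n:ℝ) * θ))) := h
      _ = -∫ θ in (0:ℝ)..(2 * π), ((k:ℝ) * (ρ θ * Real.cos ((k:ℝ) * θ) * Real.cos ((n:ℝ) * θ))
            + (-(n:ℝ)) * (ρ θ * Real.sin ((k:ℝ) * θ) * Real.sin ((n:ℝ) * θ))) := by
          congr 1; apply intervalIntegral.integral_congr; intro θ _; ring
      _ = _ := by rw [lin2 _ _ hIcc hIss]; ring
  -- M relation
  have hM : (∫ θ in (0:ℝ)..(2 * π), ρ' θ * Real.cos ((k:ℝ) * θ) * Real.cos ((n:ℝ) * θ)) =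
      (k:ℝ) * (∫ θ in (0:ℝ)..(2 * π), ρ θ * Real.sin ((k:ℝ) * θ) * Real.cos ((n:ℝ) * θ))
      + (n:ℝ) * ∫ θ in (0:ℝ)..(2 * π), ρ θ * Real.cos ((k:ℝ) * θ) * Real.sin ((n:ℝ) * θ) := by
    have hg : ∀ θ : ℝ, HasDerivAt (fun x => Real.cos ((k:ℝ) * x) * Real.cos ((n:ℝ) * x))
        (-((k:ℝ) * Real.sin ((k:ℝ) * θ)) * Real.cos ((n:ℝ) * θ)
          + Real.cos ((k:ℝ) * θ) * -((n:ℝ) * Real.sin ((n:ℝ) * θ))) θ :=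
      fun θ => (hco (k:ℝ) θ).mul (hco (n:ℝ) θ)
    have hgc : Continuous fun θ : ℝ => -((k:ℝ) * Real.sin ((k:ℝ) * θ)) * Real.cos ((n:ℝ) * θ)
        + Real.cos ((k:ℝ) * θ) * -((n:ℝ) * Real.sin ((n:ℝ) * θ)) := by fun_prop
    have hb : ρ (2 * π) * (Real.cos ((k:ℝ) * (2 * π)) * Real.cos ((n:ℝ) * (2 * π)))
        = ρ 0 * (Real.cos ((k:ℝ) * 0) * Real.cos ((n:ℝ) * 0)) := by
      rw [hcos1 k, hcos1 n, hρper]; simp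
    have h := parts _ _ hg hgc hb
    calc (∫ θ in (0:ℝ)..(2 * π), ρ' θ * Real.cos ((k:ℝ) * θ) * Real.cos ((n:ℝ) * θ))
        = ∫ θ in (0:ℝ)..(2 * π), ρ' θ * (Real.cos ((k:ℝ) * θ) * Real.cos ((n:ℝ) * θ)) := by
          simp only [mul_assoc]
      _ = -∫ θ in (0:ℝ)..(2 * π), ρ θ * (-((k:ℝ) * Real.sin ((k:ℝ) * θ)) * Real.cos ((n:ℝ) * θ)
            + Real.cos ((k:ℝ) * θ) * -((n:ℝ) * Real.sin ((n:ℝ) * θ))) := h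
      _ = -∫ θ in (0:ℝ)..(2 * π), ((-(k:ℝ)) * (ρ θ * Real.sin ((k:ℝ) * θ) * Real.cos ((n:ℝ) * θ))
            + (-(n:ℝ)) * (ρ θ * Real.cos ((k:ℝ) * θ) * Real.sin ((n:ℝ) * θ))) := by
          congr 1; apply intervalIntegral.integral_congr; intro θ _; ring
      _ = _ := by rw [lin2 _ _ hIsc hIcs]; ring
  -- T relation
  have hT : (∫ θ in (0:ℝ)..(2 * π), ρ' θ * Real.sin ((k:ℝ) * θ) * Real.sin ((n:ℝ) * θ)) =
      -(k:ℝ) * (∫ θ in (0:ℝ)..(2 * π), ρ θ * Real.cos ((k:ℝ) * θ) * Real.sin ((n:ℝ) * θ))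
      - (n:ℝ) * ∫ θ in (0:ℝ)..(2 * π), ρ θ * Real.sin ((k:ℝ) * θ) * Real.cos ((n:ℝ) * θ) := by
    have hg : ∀ θ : ℝ, HasDerivAt (fun x => Real.sin ((k:ℝ) * x) * Real.sin ((n:ℝ) * x))
        ((k:ℝ) * Real.cos ((k:ℝ) * θ) * Real.sin ((n:ℝ) * θ)
          + Real.sin ((k:ℝ) * θ) * ((n:ℝ) * Real.cos ((n:ℝ) * θ))) θ :=
      fun θ => (hs (k:ℝ) θ).mul (hs (n:ℝ) θ)
    have hgc : Continuous fun θ : ℝ => (k:ℝ) * Real.cos ((k:ℝ) * θ) * Real.sin ((n:ℝ) * θ)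
        + Real.sin ((k:ℝ) * θ) * ((n:ℝ) * Real.cos ((n:ℝ) * θ)) := by fun_prop
    have hb : ρ (2 * π) * (Real.sin ((k:ℝ) * (2 * π)) * Real.sin ((n:ℝ) * (2 * π)))
        = ρ 0 * (Real.sin ((k:ℝ) * 0) * Real.sin ((n:ℝ) * 0)) := by
      rw [hsin0 k]; simp
    have h := parts _ _ hg hgc hb
    calc (∫ θ in (0:ℝ)..(2 * π), ρ' θ * Real.sin ((k:ℝ) * θ) * Real.sin ((n:ℝ) * θ))
        = ∫ θ in (0:ℝ)..(2 * π), ρ' θ * (Real.sin ((k:ℝ) * θ) * Real.sin ((n:ℝ) * θ)) := by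
          simp only [mul_assoc]
      _ = -∫ θ in (0:ℝ)..(2 * π), ρ θ * ((k:ℝ) * Real.cos ((k:ℝ) * θ) * Real.sin ((n:ℝ) * θ)
            + Real.sin ((k:ℝ) * θ) * ((n:ℝ) * Real.cos ((n:ℝ) * θ))) := h
      _ = -∫ θ in (0:ℝ)..(2 * π), ((k:ℝ) * (ρ θ * Real.cos ((k:ℝ) * θ) * Real.sin ((n:ℝ) * θ))
            + (n:ℝ) * (ρ θ * Real.sin ((k:ℝ) * θ) * Real.cos ((n:ℝ) * θ))) := by
          congr 1; apply intervalIntegral.integral_congr; intro θ _; ring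
      _ = _ := by rw [lin2 _ _ hIcs hIsc]; ring
  -- V relation
  have hV : (∫ θ in (0:ℝ)..(2 * π), ρ' θ * Real.cos ((k:ℝ) * θ) * Real.sin ((n:ℝ) * θ)) =
      (k:ℝ) * (∫ θ in (0:ℝ)..(2 * π), ρ θ * Real.sin ((k:ℝ) * θ) * Real.sin ((n:ℝ) * θ))
      - (n:ℝ) * ∫ θ in (0:ℝ)..(2 * π), ρ θ * Real.cos ((k:ℝ) * θ) * Real.cos ((n:ℝ) * θ) := by
    have hg : ∀ θ : ℝ, HasDerivAt (fun x => Real.cos ((k:ℝ) * x) * Real.sin ((n:ℝ) * x))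
        (-((k:ℝ) * Real.sin ((k:ℝ) * θ)) * Real.sin ((n:ℝ) * θ)
          + Real.cos ((k:ℝ) * θ) * ((n:ℝ) * Real.cos ((n:ℝ) * θ))) θ :=
      fun θ => (hco (k:ℝ) θ).mul (hs (n:ℝ) θ)
    have hgc : Continuous fun θ : ℝ => -((k:ℝ) * Real.sin ((k:ℝ) * θ)) * Real.sin ((n:ℝ) * θ)
        + Real.cos ((k:ℝ) * θ) * ((n:ℝ) * Real.cos ((n:ℝ) * θ)) := by fun_prop
    have hb : ρ (2 * π) * (Real.cos ((k:ℝ) * (2 * π)) * Real.sin ((n:ℝ) * (2 * π)))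
        = ρ 0 * (Real.cos ((k:ℝ) * 0) * Real.sin ((n:ℝ) * 0)) := by
      rw [hsin0 n]; simp
    have h := parts _ _ hg hgc hb
    calc (∫ θ in (0:ℝ)..(2 * π), ρ' θ * Real.cos ((k:ℝ) * θ) * Real.sin ((n:ℝ) * θ))
        = ∫ θ in (0:ℝ)..(2 * π), ρ' θ * (Real.cos ((k:ℝ) * θ) * Real.sin ((n:ℝ) * θ)) := by
          simp only [mul_assoc]
      _ = -∫ θ in (0:ℝ)..(2 * π), ρ θ * (-((k:ℝ) * Real.sin ((k:ℝ) * θ)) * Real.sin ((n:ℝ) * θ)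
            + Real.cos ((k:ℝ) * θ) * ((n:ℝ) * Real.cos ((n:ℝ) * θ))) := h
      _ = -∫ θ in (0:ℝ)..(2 * π), ((-(k:ℝ)) * (ρ θ * Real.sin ((k:ℝ) * θ) * Real.sin ((n:ℝ) * θ))
            + (n:ℝ) * (ρ θ * Real.cos ((k:ℝ) * θ) * Real.cos ((n:ℝ) * θ))) := by
          congr 1; apply intervalIntegral.integral_congr; intro θ _; ring
      _ = _ := by rw [lin2 _ _ hIss hIcc]; ring
  have eK : K = -(k:ℝ) * L + (n:ℝ) * W := by
    unfold K L W; rw [hK]; ring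
  have eM : M = (k:ℝ) * N + (n:ℝ) * U := by
    unfold M N U; rw [hM]; ring
  have eT : T = -(k:ℝ) * U - (n:ℝ) * N := by
    unfold T U N; rw [hT]; ring
  have eV : V = (k:ℝ) * W - (n:ℝ) * L := by
    unfold V W L; rw [hV]; ring
  have eβ : β = (k:ℝ) - (n:ℝ) - 1 := rfl
  rw [eK, eM, eT, eV, eβ]; ring
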